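/- Let F be a graph with n vertices and m edges, let k ∈ ℕ, let H ∈ IIM_k(K_n), and set t = C(n,2) − m (the number of edges of K_n not in F). Suppose there exist step indices 0 = l_0 < l_1 < … < l_t ≤ k and sets U_0 ⊆ U_1 ⊆ … ⊆ U_t ⊆ V(H) such that: U_0 is the set of level-0 vertices (the vertices of the initial K_n); and for each 1 ≤ i ≤ t, every vertex of U_{i−1} is cloned (not anticloned) at step l_i, and U_i equals U_{i−1} together with the step-l_i clones of all vertices of U_{i−1}. Then H contains an induced subgraph isomorphic to F. -/

import Mathlib

/-- Vertex type after `l` IIM steps starting from vertex type `V`: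
at each step every existing vertex gets one new copy. -/
def IterV (V : Type) : ℕ → Type
  | 0 => V
  | l + 1 => IterV V l ⊕ IterV V l

instance iterVFintype {V : Type} [Fintype V] : ∀ l, Fintype (IterV V l)
  | 0 => inferInstanceAs (Fintype V)
  | l + 1 =>
    letI := iterVFintype (V := V) l
    inferInstanceAs (Fintype (IterV V l ⊕ IterV V l))

instance iterVNonempty {V : Type} [Nonempty V] : ∀ l, Nonempty (IterV V l)
  | 0 => inferInstanceAs (Nonempty V)
  | l + 1 =>
    letI := iterVNonempty (V := V) l
    inferInstanceAs (Nonempty (IterV V l ⊕ IterV V l))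

/-- One IIM step: each vertex `v` of `G` gets a new copy (`Sum.inr v`), which is a
clone of `v` (joined to the closed neighborhood of `v`) if `σ v = true`, and an
anticlone of `v` (joined to the complement of the closed neighborhood) if `σ v = false`.
Old vertices (`Sum.inl`) keep the edges of `G`; new vertices form an independent set. -/
def iimStep {V : Type} (G : SimpleGraph V) (σ : V → Bool) : SimpleGraph (V ⊕ V) where
  Adj x y :=
    match x, y with
    | Sum.inl u, Sum.inl v => G.Adj u v
    | Sum.inl u, Sum.inr v =>
        if σ v = true then u = v ∨ G.Adj u v else ¬(u = v ∨ G.Adj u v)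
    | Sum.inr u, Sum.inl v =>
        if σ u = true then v = u ∨ G.Adj v u else ¬(v = u ∨ G.Adj v u)
    | Sum.inr _, Sum.inr _ => False
  symm := ⟨by
    rintro (u | u) (v | v) h
    · exact G.adj_symm h
    · exact h
    · exact h
    · exact h⟩
  loopless := ⟨by
    rintro (u | u) h
    · exact G.irrefl h
    · exact h⟩

/-- The IIM graph after `l` steps starting from `G`, where `σ i` records, for each
vertex existing after `i` steps, whether its copy created at step `i+1` is a clone
(`true`) or an anticlone (`false`).  `IIM_l(G)` is exactly the set of graphs of the
form `iimGraph G σ l` as `σ` varies. -/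
def iimGraph {V : Type} (G : SimpleGraph V) (σ : ∀ i, IterV V i → Bool) :
    ∀ l, SimpleGraph (IterV V l)
  | 0 => G
  | l + 1 => iimStep (iimGraph G σ l) (σ l)

/-- The level (creation step) of a vertex of an IIM graph. -/
def levelOf {V : Type} : ∀ l, IterV V l → ℕ
  | 0, _ => 0
  | l + 1, Sum.inl x => levelOf l x
  | l + 1, Sum.inr _ => l + 1

/-- The (level-0) vertex `x` of the initial graph, viewed as a vertex of the IIM graph
after `l` steps. -/
def liftV {V : Type} (x : V) : ∀ l, IterV V l
  | 0 => x
  | l + 1 => Sum.inl (liftV x l)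

/-- `clonedAt σ l s x` says: the vertex `x` of the IIM graph after `l` steps already
existed before step `s` (`1 ≤ s ≤ l`), and its copy created at step `s` is a clone
(not an anticlone). -/
def clonedAt {V : Type} (σ : ∀ i, IterV V i → Bool) :
    ∀ (l : ℕ), ℕ → IterV V l → Prop
  | 0, _, _ => False
  | l + 1, s, Sum.inl y => if s = l + 1 then σ l y = true else clonedAt σ l s y
  | _ + 1, _, Sum.inr _ => False

/-- `copyAt l s x = some x'` when the vertex `x` of the IIM graph after `l` steps
already existed before step `s` and `x'` is its copy created at step `s`
(viewed in the IIM graph after `l` steps); otherwise `none`. -/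
def copyAt {V : Type} :
    ∀ (l : ℕ), ℕ → IterV V l → Option (IterV V l)
  | 0, _, _ => none
  | l + 1, s, Sum.inl y =>
      if s = l + 1 then some (Sum.inr y) else (copyAt l s y).map Sum.inl
  | _ + 1, _, Sum.inr _ => none

section AuxLemmas

variable {V : Type}

lemma levelOf_le : ∀ (l : ℕ) (x : IterV V l), levelOf l x ≤ l
  | 0, _ => le_refl _
  | l + 1, Sum.inl x => (levelOf_le l x).trans (Nat.le_succ l)
  | _ + 1, Sum.inr _ => le_refl _

lemma liftV_inj : ∀ (l : ℕ) {x y : V}, liftV x l = liftV y l → x = y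
  | 0, _, _, h => h
  | l + 1, _, _, h => liftV_inj l (Sum.inl.inj h)

lemma copyAt_isSome_le : ∀ (l s : ℕ) (u u' : IterV V l),
    copyAt l s u = some u' → s ≤ l := by
  intro l
  induction l with
  | zero => intro s u u' h; simp [copyAt] at h
  | succ l ih =>
    rintro s (u | u) u' h
    · simp only [copyAt] at h
      split at h
      · omega
      · rcases Option.map_eq_some_iff.mp h with ⟨w, hw, -⟩
        exact (ih s u w hw).trans (Nat.le_succ l)
    · simp [copyAt] at h

lemma levelOf_copyAt : ∀ (l s : ℕ) (u u' : IterV V l),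
    copyAt l s u = some u' → levelOf l u < s ∧ levelOf l u' = s := by
  intro l
  induction l with
  | zero => intro s u u' h; simp [copyAt] at h
  | succ l ih =>
    rintro s (u | u) u' h
    · simp only [copyAt] at h
      split at h
      · rename_i hs
        rcases Option.some.inj h with rfl
        subst hs
        refine ⟨?_, rfl⟩
        simp only [levelOf]
        exact Nat.lt_succ_of_le (levelOf_le l u)
      · rcases Option.map_eq_some_iff.mp h with ⟨w, hw, rfl⟩
        obtain ⟨h1, h2⟩ := ih s u w hw
        exact ⟨h1, h2⟩
    · simp [copyAt] at h

lemma copyAt_inj : ∀ (l s : ℕ) (u v w : IterV V l),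
    copyAt l s u = some w → copyAt l s v = some w → u = v := by
  intro l
  induction l with
  | zero => intro s u v w h; simp [copyAt] at h
  | succ l ih =>
    rintro s (u | u) (v | v) w hu hv
    · simp only [copyAt] at hu hv
      by_cases hs : s = l + 1
      · rw [if_pos hs] at hu hv
        rcases Option.some.inj hu with rfl
        rcases Sum.inr.inj (Option.some.inj hv) with rfl
        rfl
      · rw [if_neg hs] at hu hv
        rcases Option.map_eq_some_iff.mp hu with ⟨w1, hw1, hww1⟩
        rcases Option.map_eq_some_iff.mp hv with ⟨w2, hw2, hww2⟩
        subst hww1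
        have hw12 : w2 = w1 := Sum.inl.inj hww2
        rw [hw12] at hw2
        rw [ih s u v w1 hw1 hw2]
    · simp [copyAt] at hv
    · simp [copyAt] at hu
    · simp [copyAt] at hu

lemma clonedAt_copyAt (σ : ∀ i, IterV V i → Bool) :
    ∀ (l s : ℕ) (u : IterV V l), clonedAt σ l s u → ∃ u', copyAt l s u = some u' := by
  intro l
  induction l with
  | zero => intro s u h; simp [clonedAt] at h
  | succ l ih =>
    rintro s (u | u) h
    · simp only [clonedAt] at h
      simp only [copyAt]
      split at h
      · rename_i hs
        exact ⟨Sum.inr u, by rw [if_pos hs]⟩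
      · rename_i hs
        obtain ⟨u', hu'⟩ := ih s u h
        exact ⟨Sum.inl u', by rw [if_neg hs, hu']; rfl⟩
    · simp [clonedAt] at h

lemma adj_liftV (G : SimpleGraph V) (σ : ∀ i, IterV V i → Bool) :
    ∀ (l : ℕ) (x y : V),
      (iimGraph G σ l).Adj (liftV x l) (liftV y l) ↔ G.Adj x y := by
  intro l
  induction l with
  | zero => intro x y; rfl
  | succ l ih =>
    intro x y
    show (iimStep (iimGraph G σ l) (σ l)).Adj (Sum.inl (liftV x l)) (Sum.inl (liftV y l)) ↔ _
    exact ih x y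

lemma not_adj_copies (G : SimpleGraph V) (σ : ∀ i, IterV V i → Bool) :
    ∀ (l s : ℕ) (u u' v v' : IterV V l),
      copyAt l s u = some u' → copyAt l s v = some v' →
      ¬ (iimGraph G σ l).Adj u' v' := by
  intro l
  induction l with
  | zero => intro s u u' v v' h; simp [copyAt] at h
  | succ l ih =>
    rintro s (u | u) u' (v | v) v' hu hv hadj
    · simp only [copyAt] at hu hv
      by_cases hs : s = l + 1
      · rw [if_pos hs] at hu hv
        rcases Option.some.inj hu with rfl
        rcases Option.some.inj hv with rfl
        exact hadj
      · rw [if_neg hs] at hu hv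
        rcases Option.map_eq_some_iff.mp hu with ⟨w1, hw1, rfl⟩
        rcases Option.map_eq_some_iff.mp hv with ⟨w2, hw2, rfl⟩
        exact ih s u w1 v w2 hw1 hw2 hadj
    · simp [copyAt] at hv
    · simp [copyAt] at hu
    · simp [copyAt] at hu

lemma adj_copy_old (G : SimpleGraph V) (σ : ∀ i, IterV V i → Bool) :
    ∀ (l s : ℕ) (u u' v : IterV V l),
      clonedAt σ l s u → copyAt l s u = some u' → levelOf l v < s →
      ((iimGraph G σ l).Adj u' v ↔ (v = u ∨ (iimGraph G σ l).Adj u v)) := by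
  intro l
  induction l with
  | zero => intro s u u' v hc h; simp [copyAt] at h
  | succ l ih =>
    rintro s (u | u) u' (v | v) hc hcp hlv
    · simp only [clonedAt] at hc
      simp only [copyAt] at hcp
      split at hcp
      · rename_i hs
        rcases Option.some.inj hcp with rfl
        rw [if_pos hs] at hc
        show (if σ l u = true then v = u ∨ (iimGraph G σ l).Adj v u
              else ¬(v = u ∨ (iimGraph G σ l).Adj v u)) ↔ _
        rw [if_pos hc]
        constructor
        · rintro (rfl | h)
          · exact Or.inl rfl
          · exact Or.inr ((iimGraph G σ l).adj_symm h)
        · rintro (h | h)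
          · exact Or.inl (Sum.inl.inj h)
          · exact Or.inr ((iimGraph G σ l).adj_symm h)
      · rename_i hs
        rw [if_neg hs] at hc
        rcases Option.map_eq_some_iff.mp hcp with ⟨w, hw, rfl⟩
        have hlv' : levelOf l v < s := hlv
        have := ih s u w v hc hw hlv'
        show (iimGraph G σ l).Adj w v ↔ Sum.inl v = Sum.inl u ∨ (iimGraph G σ l).Adj u v
        rw [this]
        simp
    · -- v = Sum.inr: level l+1 < s, but copyAt requires s ≤ l+1, and s ≠ l+1 forces s ≤ l
      exfalso
      simp only [copyAt] at hcp
      have hlv' : (l + 1 : ℕ) < s := hlv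
      split at hcp
      · omega
      · rcases Option.map_eq_some_iff.mp hcp with ⟨w, hw, -⟩
        have := copyAt_isSome_le l s u w hw
        omega
    · simp [clonedAt] at hc
    · simp [clonedAt] at hc

end AuxLemmas

/-- Let `F` be a graph on `n` vertices with `m` edges, let
`H ∈ IIM_k(K_n)`, and let `t = C(n,2) - m`.  Suppose there are steps
`0 = l₀ < l₁ < … < l_t ≤ k` and sets `U₀ ⊆ … ⊆ U_t ⊆ V(H)` such that `U₀` is the set
of level-0 vertices, every vertex of `U_{i-1}` is cloned at step `l_i`, and `U_i` is
`U_{i-1}` together with the step-`l_i` clones of its vertices.  Then `H` contains an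
induced copy of `F`. -/
theorem stmt17 {n : ℕ} (F : SimpleGraph (Fin n)) (m : ℕ) (hm : m = F.edgeSet.ncard)
    (k : ℕ) (σ : ∀ i, IterV (Fin n) i → Bool)
    (t : ℕ) (ht : t = Nat.choose n 2 - m)
    (lv : ℕ → ℕ) (hlv0 : lv 0 = 0)
    (hmono : ∀ i, i < t → lv i < lv (i + 1)) (hlvk : lv t ≤ k)
    (U : ℕ → Set (IterV (Fin n) k))
    (hU0 : U 0 = Set.range fun x : Fin n => liftV x k)
    (hcl : ∀ i, 1 ≤ i → i ≤ t → ∀ u ∈ U (i - 1), clonedAt σ k (lv i) u)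
    (hUi : ∀ i, 1 ≤ i → i ≤ t →
      U i = U (i - 1) ∪ {w | ∃ u ∈ U (i - 1), copyAt k (lv i) u = some w}) :
    Nonempty (F ↪g iimGraph (⊤ : SimpleGraph (Fin n)) σ k) := by
  classical
  set H := iimGraph (⊤ : SimpleGraph (Fin n)) σ k with hH
  set NE : Set (Sym2 (Fin n)) := {e | ¬ e.IsDiag ∧ e ∉ F.edgeSet} with hNEdef
  have hsub : F.edgeSet ⊆ {e : Sym2 (Fin n) | ¬ e.IsDiag} := fun e he =>
    SimpleGraph.not_isDiag_of_mem_edgeSet F he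
  have hNEeq : NE = {e : Sym2 (Fin n) | ¬ e.IsDiag} \ F.edgeSet := by
    ext e; simp only [hNEdef, Set.mem_setOf_eq, Set.mem_diff]
  have h1 : {e : Sym2 (Fin n) | ¬ e.IsDiag}.ncard = Nat.choose n 2 := by
    rw [← Nat.card_coe_set_eq, Nat.card_eq_fintype_card]
    convert Sym2.card_subtype_not_diag (α := Fin n) using 2
    · rfl
    · simp
  have hcardNE : NE.ncard = t := by
    rw [hNEeq, Set.ncard_diff hsub (Set.toFinite _), h1, ht, hm]
  letI : Fintype ↥NE := (Set.toFinite NE).fintype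
  have hcard' : Fintype.card ↥NE = t := by
    rw [← Nat.card_eq_fintype_card, Nat.card_coe_set_eq, hcardNE]
  let g : ↥NE ≃ Fin t := Fintype.equivFinOfCardEq hcard'
  let eF : Fin t → Sym2 (Fin n) := fun j => (g.symm j : Sym2 (Fin n))
  have heF_inj : Function.Injective eF := fun j₁ j₂ h => g.symm.injective (Subtype.ext h)
  have heF_mem : ∀ j, ¬ (eF j).IsDiag ∧ eF j ∉ F.edgeSet := fun j => (g.symm j).2
  have heF_surj : ∀ z ∈ NE, ∃ j, eF j = z := fun z hz =>
    ⟨g ⟨z, hz⟩, by simp [eF]⟩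
  have key : ∀ i, i ≤ t → ∃ f : Fin n → IterV (Fin n) k,
      Function.Injective f ∧ (∀ x, f x ∈ U i) ∧
      ∀ x y : Fin n, x ≠ y →
        (H.Adj (f x) (f y) ↔ (F.Adj x y ∨ ∃ j : Fin t, i ≤ (j : ℕ) ∧ eF j = s(x, y))) := by
    intro i
    induction i with
    | zero =>
      intro _
      refine ⟨fun x => liftV x k, fun x y h => liftV_inj k h, ?_, ?_⟩
      · intro x; rw [hU0]; exact ⟨x, rfl⟩
      · intro x y hxy
        rw [hH, adj_liftV]
        simp only [SimpleGraph.top_adj]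
        constructor
        · intro _
          by_cases hF : F.Adj x y
          · exact Or.inl hF
          · have hz : s(x, y) ∈ NE :=
              ⟨by simpa [Sym2.mk_isDiag_iff] using hxy,
               by simpa [SimpleGraph.mem_edgeSet] using hF⟩
            obtain ⟨j, hj⟩ := heF_surj _ hz
            exact Or.inr ⟨j, Nat.zero_le _, hj.symm ▸ hj⟩
        · intro _; exact hxy
    | succ i ih =>
      intro hit
      obtain ⟨f, hinj, hmem, hadj⟩ := ih (Nat.le_of_succ_le hit)
      have hit' : i < t := hit
      set j₀ : Fin t := ⟨i, hit'⟩ with hj₀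
      obtain ⟨a, b, hab⟩ : ∃ a b, eF j₀ = s(a, b) := Sym2.exists.mp ⟨eF j₀, rfl⟩
      have habne : a ≠ b := by
        have h2 := (heF_mem j₀).1; rw [hab] at h2
        simpa [Sym2.mk_isDiag_iff] using h2
      have habF : ¬ F.Adj a b := by
        have h2 := (heF_mem j₀).2; rw [hab] at h2
        simpa [SimpleGraph.mem_edgeSet] using h2
      set s' := lv (i + 1) with hs'
      have hmem' : ∀ x, f x ∈ U (i + 1 - 1) := by
        intro x; rw [Nat.add_sub_cancel]; exact hmem x
      have hclone : ∀ x : Fin n, clonedAt σ k s' (f x) := fun x =>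
        hcl (i + 1) (Nat.le_add_left 1 i) hit (f x) (hmem' x)
      have hcopy : ∀ x : Fin n, ∃ w, copyAt k s' (f x) = some w := fun x =>
        clonedAt_copyAt σ k s' (f x) (hclone x)
      choose cp hcp using hcopy
      set f' : Fin n → IterV (Fin n) k :=
        fun x => if x = a ∨ x = b then cp x else f x with hf'
      have hlvf : ∀ x, levelOf k (f x) < s' := fun x =>
        (levelOf_copyAt k s' (f x) (cp x) (hcp x)).1
      have hlvcp : ∀ x, levelOf k (cp x) = s' := fun x =>
        (levelOf_copyAt k s' (f x) (cp x) (hcp x)).2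
      have hcpinj : ∀ x y, cp x = cp y → x = y := by
        intro x y h
        exact hinj (copyAt_inj k s' (f x) (f y) (cp y) (h ▸ hcp x) (hcp y))
      have hcpne : ∀ x y, cp x ≠ f y := by
        intro x y h
        have h1 := hlvcp x
        rw [h] at h1
        exact absurd (hlvf y) (by omega)
      have hinj' : Function.Injective f' := by
        intro x y h
        simp only [hf'] at h
        by_cases hx : x = a ∨ x = b <;> by_cases hy : y = a ∨ y = b
        · rw [if_pos hx, if_pos hy] at h; exact hcpinj x y h
        · rw [if_pos hx, if_neg hy] at h; exact absurd h (hcpne x y)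
        · rw [if_neg hx, if_pos hy] at h; exact absurd h.symm (hcpne y x)
        · rw [if_neg hx, if_neg hy] at h; exact hinj h
      have hstep : ∀ x y : Fin n, x ≠ y →
          (H.Adj (f' x) (f' y) ↔ (H.Adj (f x) (f y) ∧ s(x, y) ≠ s(a, b))) := by
        intro x y hxy
        by_cases hx : x = a ∨ x = b <;> by_cases hy : y = a ∨ y = b
        · have hxyab : s(x, y) = s(a, b) := by
            rcases hx with rfl | rfl <;> rcases hy with rfl | rfl
            · exact absurd rfl hxy
            · rfl
            · exact Sym2.eq_swap
            · exact absurd rfl hxy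
          simp only [hf', if_pos hx, if_pos hy]
          exact iff_of_false (not_adj_copies ⊤ σ k s' (f x) (cp x) (f y) (cp y)
            (hcp x) (hcp y)) (by simp [hxyab])
        · have hne : s(x, y) ≠ s(a, b) := by
            intro hE
            rcases Sym2.eq_iff.mp hE with ⟨h1, h2⟩ | ⟨h1, h2⟩
            · exact hy (Or.inr h2)
            · exact hy (Or.inl h2)
          simp only [hf', if_pos hx, if_neg hy]
          rw [adj_copy_old ⊤ σ k s' (f x) (cp x) (f y) (hclone x) (hcp x) (hlvf y)]
          have hfne : f y ≠ f x := fun h => hxy (hinj h).symm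
          simp [hfne, hne, hH]
        · have hne : s(x, y) ≠ s(a, b) := by
            intro hE
            rcases Sym2.eq_iff.mp hE with ⟨h1, h2⟩ | ⟨h1, h2⟩
            · exact hx (Or.inl h1)
            · exact hx (Or.inr h1)
          simp only [hf', if_neg hx, if_pos hy]
          rw [H.adj_comm,
            adj_copy_old ⊤ σ k s' (f y) (cp y) (f x) (hclone y) (hcp y) (hlvf x)]
          have hfne : f x ≠ f y := fun h => hxy (hinj h)
          rw [H.adj_comm (f y) (f x)]
          simp [hfne, hne]
        · have hne : s(x, y) ≠ s(a, b) := by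
            intro hE
            rcases Sym2.eq_iff.mp hE with ⟨h1, h2⟩ | ⟨h1, h2⟩
            · exact hx (Or.inl h1)
            · exact hx (Or.inr h1)
          simp only [hf', if_neg hx, if_neg hy]
          simp [hne]
      refine ⟨f', hinj', ?_, ?_⟩
      · intro x
        rw [hUi (i + 1) (Nat.le_add_left 1 i) hit]
        by_cases hx : x = a ∨ x = b
        · exact Or.inr ⟨f x, hmem' x, by simp only [hf', if_pos hx]; exact hcp x⟩
        · refine Or.inl ?_
          simp only [hf', if_neg hx]
          exact hmem' x
      · intro x y hxy
        rw [hstep x y hxy, hadj x y hxy]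
        constructor
        · rintro ⟨hA | ⟨j, hji, hje⟩, hne⟩
          · exact Or.inl hA
          · refine Or.inr ⟨j, ?_, hje⟩
            rcases Nat.lt_or_ge (j : ℕ) (i + 1) with h | h
            · exfalso
              have hjj : j = j₀ := Fin.ext (by simp [hj₀]; omega)
              rw [hjj, hab] at hje
              exact hne hje.symm
            · exact h
        · rintro (hA | ⟨j, hji, hje⟩)
          · refine ⟨Or.inl hA, ?_⟩
            intro hE
            have hmemE := F.mem_edgeSet.mpr hA
            rw [hE] at hmemE
            exact habF (F.mem_edgeSet.mp hmemE)
          · refine ⟨Or.inr ⟨j, by omega, hje⟩, ?_⟩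
            intro hE
            have hjj : j = j₀ := heF_inj (by rw [hje, hE, hab])
            have : (j : ℕ) = i := by rw [hjj]
            omega
  obtain ⟨f, hinj, -, hadj⟩ := key t le_rfl
  refine ⟨⟨⟨f, hinj⟩, ?_⟩⟩
  intro x y
  by_cases hxy : x = y
  · subst hxy
    exact iff_of_false (H.irrefl) (F.irrefl)
  · show H.Adj (f x) (f y) ↔ F.Adj x y
    rw [hadj x y hxy]
    constructor
    · rintro (h | ⟨j, hj, -⟩)
      · exact h
      · exact absurd hj (by have := j.isLt; omega)
    · exact Or.inl
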